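/- If E is a normed space whose weak topology has the Pytkeev property, then for every subset A of E with 0 in the weak closure of A but 0 ∉ A, there exists n ∈ ℕ such that 0 lies in the weak closure of A ∩ nB, where B is the closed unit ball. -/

import Mathlib

open Filter Topology Set

/-- `X` has the Pytkeev property. -/
def PytkeevSpace (X : Type*) [TopologicalSpace X] : Prop :=
  ∀ (A : Set X) (x : X), x ∈ closure A \ A →
    ∃ S : ℕ → Set X, (∀ n, S n ⊆ A ∧ (S n).Infinite) ∧
      ∀ U ∈ nhds x, ∃ n, S n ⊆ U

namespace BoundedPieceAux

open NormedSpace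

variable {E : Type*} [NormedAddCommGroup E] [NormedSpace ℝ E]

/-- Evaluation of a continuous functional is weakly continuous. -/
theorem weak_eval_continuous (f : StrongDual ℝ E) :
    Continuous fun x : WeakSpace ℝ E => f ((toWeakSpace ℝ E).symm x) :=
  WeakBilin.eval_continuous ((topDualPairing ℝ E).flip) f

/-- Basic neighborhoods of `0` in the weak topology. -/
theorem exists_finset_of_mem_nhds {U : Set (WeakSpace ℝ E)}
    (hU : U ∈ 𝓝 (0 : WeakSpace ℝ E)) :
    ∃ (s : Finset (StrongDual ℝ E)) (ε : ℝ), 0 < ε ∧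
      {x : WeakSpace ℝ E | ∀ f ∈ s, |f ((toWeakSpace ℝ E).symm x)| < ε} ⊆ U := by
  classical
  set φ : WeakSpace ℝ E → (StrongDual ℝ E → ℝ) :=
    fun x f => (topDualPairing ℝ E).flip x f with hφ
  have hnhds : 𝓝 (0 : WeakSpace ℝ E) = Filter.comap φ (𝓝 (φ 0)) := nhds_induced _ _
  rw [hnhds, Filter.mem_comap] at hU
  obtain ⟨V, hV, hVU⟩ := hU
  rw [nhds_pi] at hV
  obtain ⟨I, t, ht, htV⟩ := Filter.mem_pi'.mp hV
  have hzero : ∀ f : StrongDual ℝ E, φ 0 f = 0 := by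
    intro f; simp [hφ]; exact map_zero f
  have ht' : ∀ f : StrongDual ℝ E, ∃ δ : ℝ, 0 < δ ∧ Metric.ball (φ 0 f) δ ⊆ t f := by
    intro f
    obtain ⟨δ, hδ0, hδ⟩ := Metric.mem_nhds_iff.mp (ht f)
    exact ⟨δ, hδ0, hδ⟩
  choose δ hδ0 hδ using ht'
  rcases I.eq_empty_or_nonempty with hI | hI
  · refine ⟨I, 1, one_pos, fun x _ => hVU ?_⟩
    apply htV
    intro f hf
    rw [hI] at hf
    simp at hf
  · set ε : ℝ := I.inf' hI δ with hε
    have hε0 : 0 < ε := (Finset.lt_inf'_iff hI).mpr fun f _ => hδ0 f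
    refine ⟨I, ε, hε0, fun x hx => hVU ?_⟩
    apply htV
    intro f hf
    apply hδ f
    rw [Metric.mem_ball, hzero f, Real.dist_eq, sub_zero]
    have h1 : |f ((toWeakSpace ℝ E).symm x)| < ε := hx f hf
    have h2 : ε ≤ δ f := Finset.inf'_le _ hf
    have : φ x f = f ((toWeakSpace ℝ E).symm x) := rfl
    rw [this]
    exact lt_of_lt_of_le h1 h2

/-- One stage of the countable fan tightness selection: a finite subset of `A'` that
handles all tuples of `j` functionals of norm at most `m`. -/
theorem stage (A' : Set (WeakSpace ℝ E)) (hcl : (0 : WeakSpace ℝ E) ∈ closure A')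
    (j m : ℕ) :
    ∃ P : Set (WeakSpace ℝ E), P.Finite ∧ P ⊆ A' ∧
      ∀ g : Fin j → StrongDual ℝ E, (∀ i, ‖g i‖ ≤ (m : ℝ)) →
        ∃ a ∈ P, ∀ i, |g i ((toWeakSpace ℝ E).symm a)| < 1 := by
  classical
  set K : Set (Fin j → WeakDual ℝ E) :=
    Set.univ.pi (fun _ => WeakDual.toStrongDual ⁻¹' Metric.closedBall 0 (m : ℝ)) with hK
  have hKc : IsCompact K :=
    isCompact_univ_pi fun _ => WeakDual.isCompact_closedBall (𝕜 := ℝ) 0 (m : ℝ)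
  set O : WeakSpace ℝ E → Set (Fin j → WeakDual ℝ E) :=
    fun a => {g | ∀ i, |(g i) ((toWeakSpace ℝ E).symm a)| < 1} with hO
  have hOopen : ∀ a, IsOpen (O a) := by
    intro a
    have : O a = ⋂ i : Fin j,
        (fun g : Fin j → WeakDual ℝ E => (g i) ((toWeakSpace ℝ E).symm a)) ⁻¹'
          {y : ℝ | |y| < 1} := by
      ext g; simp [hO]
    rw [this]
    refine isOpen_iInter_of_finite fun i => ?_
    have hcont : Continuous fun g : Fin j → WeakDual ℝ E =>
        (g i) ((toWeakSpace ℝ E).symm a) :=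
      (WeakDual.eval_continuous _).comp (continuous_apply i)
    have hopen : IsOpen {y : ℝ | |y| < 1} :=
      isOpen_lt continuous_abs continuous_const
    exact hopen.preimage hcont
  have hcover : K ⊆ ⋃ a ∈ A', O a := by
    intro g _
    have hUopen : IsOpen {x : WeakSpace ℝ E |
        ∀ i : Fin j, |(g i) ((toWeakSpace ℝ E).symm x)| < 1} := by
      have : {x : WeakSpace ℝ E | ∀ i : Fin j, |(g i) ((toWeakSpace ℝ E).symm x)| < 1}
          = ⋂ i : Fin j, (fun x : WeakSpace ℝ E =>
              (g i) ((toWeakSpace ℝ E).symm x)) ⁻¹' {y : ℝ | |y| < 1} := by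
        ext x; simp
      rw [this]
      refine isOpen_iInter_of_finite fun i => ?_
      exact (isOpen_lt continuous_abs continuous_const).preimage
        (weak_eval_continuous (WeakDual.toStrongDual (g i)))
    have hmem : (0 : WeakSpace ℝ E) ∈ {x : WeakSpace ℝ E |
        ∀ i : Fin j, |(g i) ((toWeakSpace ℝ E).symm x)| < 1} := by
      intro i
      simp
    obtain ⟨a, ha, haA⟩ := mem_closure_iff_nhds.mp hcl _ (hUopen.mem_nhds hmem)
    exact Set.mem_biUnion haA ha
  obtain ⟨P0, hP0A, hP0fin, hP0cover⟩ := hKc.elim_finite_subcover_image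
    (fun a _ => hOopen a) hcover
  refine ⟨P0, hP0fin, hP0A, ?_⟩
  intro g hg
  set gW : Fin j → WeakDual ℝ E := fun i => WeakDual.toStrongDual.symm (g i) with hgW
  have hgK : gW ∈ K := by
    intro i _
    simp only [hK, Set.mem_preimage, Metric.mem_closedBall]
    have : WeakDual.toStrongDual (gW i) = g i := by
      simp [hgW]
    rw [this, dist_zero_right]
    exact hg i
  obtain ⟨a, haP, haO⟩ := Set.mem_iUnion₂.mp (hP0cover hgK)
  refine ⟨a, haP, fun i => ?_⟩
  have := haO i
  simpa [hgW] using this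

end BoundedPieceAux

/-- The Claim in the proof of Theorem 1.4: if a normed space with the weak topology has the
Pytkeev property, then any set having `0` as a weak closure point (and not containing `0`)
has a bounded piece `A ∩ nB` with `0` in its weak closure. -/
theorem bounded_piece_of_weak_pytkeev
    {E : Type*} [NormedAddCommGroup E] [NormedSpace ℝ E]
    (hP : PytkeevSpace (WeakSpace ℝ E))
    (A : Set (WeakSpace ℝ E))
    (hA : (0 : WeakSpace ℝ E) ∈ closure A \ A) :
    ∃ n : ℕ, (0 : WeakSpace ℝ E) ∈
      closure (A ∩ {x : WeakSpace ℝ E | ‖(toWeakSpace ℝ E).symm x‖ ≤ n}) := by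
  classical
  by_contra hcon
  push_neg at hcon
  set e : WeakSpace ℝ E → E := fun x => (toWeakSpace ℝ E).symm x with he
  -- 0 is a weak closure point of every "far" part of A
  have hAn : ∀ n : ℕ, (0 : WeakSpace ℝ E) ∈
      closure (A \ {x : WeakSpace ℝ E | ‖e x‖ ≤ (n : ℝ)}) := by
    intro n
    have hsplit : A = (A ∩ {x : WeakSpace ℝ E | ‖e x‖ ≤ (n : ℝ)}) ∪
        (A \ {x : WeakSpace ℝ E | ‖e x‖ ≤ (n : ℝ)}) :=
      (Set.inter_union_diff A _).symm
    have h0 : (0 : WeakSpace ℝ E) ∈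
        closure (A ∩ {x : WeakSpace ℝ E | ‖e x‖ ≤ (n : ℝ)}) ∪
        closure (A \ {x : WeakSpace ℝ E | ‖e x‖ ≤ (n : ℝ)}) := by
      rw [← closure_union, ← hsplit]
      exact hA.1
    rcases h0 with h | h
    · exact absurd h (hcon n)
    · exact h
  -- the countable fan-tightness selection
  have hstage : ∀ n : ℕ, ∃ P : Set (WeakSpace ℝ E), P.Finite ∧
      P ⊆ (A \ {x : WeakSpace ℝ E | ‖e x‖ ≤ (n : ℝ)}) ∧
      ∀ g : Fin (Nat.unpair n).1 → StrongDual ℝ E,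
        (∀ i, ‖g i‖ ≤ ((Nat.unpair n).2 : ℝ)) →
        ∃ a ∈ P, ∀ i, |g i (e a)| < 1 := by
    intro n
    exact BoundedPieceAux.stage _ (hAn n) (Nat.unpair n).1 (Nat.unpair n).2
  choose P hPfin hPsub hPcover using hstage
  set D : Set (WeakSpace ℝ E) := ⋃ n, P n with hD
  have hDA : D ⊆ A := by
    intro x hx
    obtain ⟨n, hn⟩ := Set.mem_iUnion.mp hx
    exact (hPsub n hn).1
  have hD0 : (0 : WeakSpace ℝ E) ∉ D := fun h => hA.2 (hDA h)
  -- D has finite intersections with balls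
  have hDfin : ∀ m : ℕ, (D ∩ {x : WeakSpace ℝ E | ‖e x‖ ≤ (m : ℝ)}).Finite := by
    intro m
    have hsub : D ∩ {x : WeakSpace ℝ E | ‖e x‖ ≤ (m : ℝ)} ⊆
        ⋃ n ∈ Finset.range m, P n := by
      rintro x ⟨hxD, hxm⟩
      obtain ⟨n, hn⟩ := Set.mem_iUnion.mp hxD
      have hfar : ¬ (‖e x‖ ≤ (n : ℝ)) := (hPsub n hn).2
      have hnm : n < m := by
        by_contra hnm
        push_neg at hnm
        exact hfar (le_trans hxm (by exact_mod_cast hnm))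
      exact Set.mem_biUnion (Finset.mem_range.mpr hnm) hn
    exact Set.Finite.subset (Set.Finite.biUnion (Finset.range m).finite_toSet
      (fun n _ => hPfin n)) hsub
  -- 0 is in the weak closure of D
  have hDcl : (0 : WeakSpace ℝ E) ∈ closure D := by
    rw [mem_closure_iff_nhds]
    intro U hU
    obtain ⟨s, ε, hε0, hsU⟩ := BoundedPieceAux.exists_finset_of_mem_nhds hU
    set j : ℕ := s.card with hj
    set g : Fin j → StrongDual ℝ E := fun i => ε⁻¹ • ((s.equivFin.symm i : s) : StrongDual ℝ E) with hg
    set m : ℕ := Finset.univ.sup (fun i : Fin j => ⌈‖g i‖⌉₊) with hm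
    have hgm : ∀ i, ‖g i‖ ≤ (m : ℝ) := by
      intro i
      refine le_trans (Nat.le_ceil _) ?_
      have hle : ⌈‖g i‖⌉₊ ≤ m := by
        rw [hm]
        exact Finset.le_sup (f := fun i : Fin j => ⌈‖g i‖⌉₊) (Finset.mem_univ i)
      exact_mod_cast hle
    set n₀ : ℕ := Nat.pair j m with hn₀
    have hcov := hPcover n₀
    rw [Nat.unpair_pair] at hcov
    obtain ⟨a, haP, ha⟩ := hcov g hgm
    refine ⟨a, ?_, Set.mem_iUnion.mpr ⟨n₀, haP⟩⟩
    apply hsU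
    intro f hf
    have hi : ((s.equivFin.symm (s.equivFin ⟨f, hf⟩) : s) : StrongDual ℝ E) = f := by
      rw [Equiv.symm_apply_apply]
    have h1 : |g (s.equivFin ⟨f, hf⟩) (e a)| < 1 := ha _
    rw [hg] at h1
    simp only [ContinuousLinearMap.smul_apply, smul_eq_mul] at h1
    rw [hi] at h1
    have habs : |ε⁻¹ * f (e a)| = ε⁻¹ * |f (e a)| := by
      rw [abs_mul, abs_of_pos (inv_pos.mpr hε0)]
    rw [habs] at h1
    have := (inv_mul_lt_iff₀ hε0).mp h1
    simpa [mul_comm] using this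
  -- apply the Pytkeev property to D
  obtain ⟨S, hS1, hS2⟩ := hP D 0 ⟨hDcl, hD0⟩
  -- every S k is norm-unbounded
  have hub : ∀ k : ℕ, ∀ R : ℝ, ∃ x ∈ S k, R < ‖e x‖ := by
    intro k R
    obtain ⟨m, hmR⟩ := exists_nat_ge R
    have hfin : (S k ∩ {x : WeakSpace ℝ E | ‖e x‖ ≤ (m : ℝ)}).Finite :=
      Set.Finite.subset (hDfin m) (by
        intro x hx
        exact ⟨(hS1 k).1 hx.1, hx.2⟩)
    have hinf : (S k \ (S k ∩ {x : WeakSpace ℝ E | ‖e x‖ ≤ (m : ℝ)})).Infinite :=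
      Set.Infinite.diff ((hS1 k).2) hfin
    obtain ⟨x, hx⟩ := hinf.nonempty
    refine ⟨x, hx.1, ?_⟩
    have : ¬ (‖e x‖ ≤ (m : ℝ)) := fun hle => hx.2 ⟨hx.1, hle⟩
    push_neg at this
    exact lt_of_le_of_lt hmR this
  -- Baire category argument in the dual
  set C : ℕ → Set (StrongDual ℝ E) :=
    fun k => {f | ∀ x ∈ S k, |f (e x)| ≤ 1} with hC
  have hCclosed : ∀ k, IsClosed (C k) := by
    intro k
    have : C k = ⋂ x ∈ S k, (fun f : StrongDual ℝ E => f (e x)) ⁻¹' {y : ℝ | |y| ≤ 1} := by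
      ext f; simp [hC]
    rw [this]
    refine isClosed_biInter fun x _ => ?_
    have hcont : Continuous fun f : StrongDual ℝ E => f (e x) := by
      have := (NormedSpace.inclusionInDoubleDual ℝ E (e x)).continuous
      exact this
    exact IsClosed.preimage hcont (isClosed_le continuous_abs continuous_const)
  have hCint : ∀ k, interior (C k) = ∅ := by
    intro k
    rw [Set.eq_empty_iff_forall_notMem]
    intro f₀ hf₀
    obtain ⟨δ, hδ0, hball⟩ := Metric.mem_nhds_iff.mp (mem_interior_iff_mem_nhds.mp hf₀)
    obtain ⟨x, hxS, hxnorm⟩ := hub k (4 / δ)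
    have hδ4 : 0 < 4 / δ := by positivity
    have hxne : e x ≠ 0 := by
      intro h
      rw [h, norm_zero] at hxnorm
      exact absurd hxnorm (not_lt.mpr (le_of_lt hδ4))
    obtain ⟨gd, hgd1, hgd2⟩ := exists_dual_vector ℝ (e x) (norm_ne_zero_iff.mpr hxne)
    have hf₀C : f₀ ∈ C k := hball (Metric.mem_ball_self hδ0)
    have hf₁C : f₀ + (δ / 2) • gd ∈ C k := by
      apply hball
      rw [Metric.mem_ball, dist_eq_norm]
      have hsub : f₀ + (δ / 2) • gd - f₀ = (δ / 2) • gd := add_sub_cancel_left _ _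
      rw [hsub, norm_smul, hgd1, Real.norm_eq_abs, abs_of_pos (by positivity), mul_one]
      linarith
    have h1 : |f₀ (e x)| ≤ 1 := hf₀C x hxS
    have h2 : |(f₀ + (δ / 2) • gd) (e x)| ≤ 1 := hf₁C x hxS
    have hval : (f₀ + (δ / 2) • gd) (e x) = f₀ (e x) + (δ / 2) * ‖e x‖ := by
      simp only [ContinuousLinearMap.add_apply, ContinuousLinearMap.smul_apply, smul_eq_mul]
      rw [hgd2]
      norm_num
    rw [hval] at h2
    obtain ⟨h1a, h1b⟩ := abs_le.mp h1
    obtain ⟨h2a, h2b⟩ := abs_le.mp h2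
    have hbound : (δ / 2) * ‖e x‖ ≤ 2 := by linarith
    have : (δ / 2) * ‖e x‖ > 2 := by
      have h4 : ‖e x‖ > 4 / δ := hxnorm
      calc (δ / 2) * ‖e x‖ > (δ / 2) * (4 / δ) := by
            apply mul_lt_mul_of_pos_left h4 (by positivity)
          _ = 2 := by field_simp; ring
    linarith
  haveI : BaireSpace (StrongDual ℝ E) :=
    BaireSpace.of_completelyPseudoMetrizable
  have hdense : Dense (⋂ k, (C k)ᶜ) :=
    dense_iInter_of_isOpen (fun k => (hCclosed k).isOpen_compl)
      (fun k => interior_eq_empty_iff_dense_compl.mp (hCint k))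
  obtain ⟨f, hf⟩ := hdense.nonempty
  have hfC : ∀ k, ∃ x ∈ S k, 1 < |f (e x)| := by
    intro k
    have hnot : ¬ ∀ x ∈ S k, |f (e x)| ≤ 1 := Set.mem_iInter.mp hf k
    push_neg at hnot
    obtain ⟨x, hx1, hx2⟩ := hnot
    exact ⟨x, hx1, hx2⟩
  -- the neighborhood with no S k inside
  set U : Set (WeakSpace ℝ E) := {x | |f (e x)| < 1} with hUdef
  have hUopen : IsOpen U := by
    have : U = (fun x : WeakSpace ℝ E => f (e x)) ⁻¹' {y : ℝ | |y| < 1} := rfl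
    rw [this]
    exact (isOpen_lt continuous_abs continuous_const).preimage
      (BoundedPieceAux.weak_eval_continuous f)
  have hU0 : (0 : WeakSpace ℝ E) ∈ U := by
    simp [hUdef, he]
  obtain ⟨k, hk⟩ := hS2 U (hUopen.mem_nhds hU0)
  obtain ⟨x, hxS, hxf⟩ := hfC k
  have : |f (e x)| < 1 := hk hxS
  linarith
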